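/- Projection with large minimum width: for any bounded K ⊆ ℝ^d there exists an orthogonal projection P of ℝ^d such that Γ₂(P(K)) ≥ Γ₂(K)/2 and, for every unit vector θ in the image of P, the width w_{P(K)}(θ) ≥ Γ₂(K)/(2d). -/

import Mathlib

open scoped ENNReal
open MeasureTheory ProbabilityTheory Matrix Set Bornology

/-- The `ℓ_p` norm of a finite-dimensional real vector, `p ∈ [1,∞]`. -/
noncomputable def pnorm (p : ℝ≥0∞) {ι : Type*} [Fintype ι] (x : ι → ℝ) : ℝ :=
  if p = ∞ then ⨆ i, |x i| else (∑ i, |x i| ^ p.toReal) ^ (1 / p.toReal)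

/-- `tr_p M`: the `ℓ_p` norm of the diagonal of a square matrix. -/
noncomputable def trp (p : ℝ≥0∞) {ι : Type*} [Fintype ι] (M : Matrix ι ι ℝ) : ℝ :=
  pnorm p (fun i => M i i)

/-- The closed Euclidean unit ball. -/
def ball2 (ι : Type*) [Fintype ι] : Set (ι → ℝ) := {x | ∑ i, (x i) ^ 2 ≤ 1}

/-- `Γ_p(K) = inf { sqrt(tr_{p/2}(A Aᵀ)) : ∃ v, K + v ⊆ A · B₂ }`. -/
noncomputable def Gamma (p : ℝ≥0∞) {ι : Type*} [Fintype ι] [DecidableEq ι]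
    (K : Set (ι → ℝ)) : ℝ :=
  sInf {r : ℝ | ∃ A : Matrix ι ι ℝ,
    r = Real.sqrt (trp (p / 2) (A * Aᵀ)) ∧
    ∃ v : ι → ℝ, (fun x => x + v) '' K ⊆ (fun x => A.mulVec x) '' ball2 ι}

/-- The support function `h_K(θ) = sup_{x ∈ K} ⟨x, θ⟩`. -/
noncomputable def suppFn {ι : Type*} [Fintype ι] (K : Set (ι → ℝ)) (θ : ι → ℝ) : ℝ :=
  sSup ((fun x => ∑ i, x i * θ i) '' K)

/-- The width function `w_K(θ) = sup_{x ∈ K} ⟨x, θ⟩ - inf_{x ∈ K} ⟨x, θ⟩`. -/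
noncomputable def widthFn {ι : Type*} [Fintype ι] (K : Set (ι → ℝ)) (θ : ι → ℝ) : ℝ :=
  sSup ((fun x => ∑ i, x i * θ i) '' K) - sInf ((fun x => ∑ i, x i * θ i) '' K)

namespace ProjAux

variable {d : ℕ}

/-! ### Basic facts about `Gamma 2` -/

noncomputable def frobSq (A : Matrix (Fin d) (Fin d) ℝ) : ℝ := ∑ i, ∑ j, (A i j)^2

lemma frobSq_nonneg (A : Matrix (Fin d) (Fin d) ℝ) : 0 ≤ frobSq A := by
  unfold frobSq; positivity

lemma frobSq_eq_zero {A : Matrix (Fin d) (Fin d) ℝ} (h : frobSq A = 0) : A = 0 := by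
  unfold frobSq at h
  ext i j
  have h1 : ∀ i ∈ Finset.univ, (0:ℝ) ≤ ∑ j, (A i j)^2 := fun i _ => by positivity
  have h2 := (Finset.sum_eq_zero_iff_of_nonneg h1).mp h i (Finset.mem_univ i)
  have h3 := (Finset.sum_eq_zero_iff_of_nonneg (fun j _ => sq_nonneg (A i j))).mp h2 j
    (Finset.mem_univ j)
  simpa [pow_eq_zero_iff] using h3

lemma trp_two (A : Matrix (Fin d) (Fin d) ℝ) : trp ((2:ℝ≥0∞)/2) (A * Aᵀ) = frobSq A := by
  have h2 : (2:ℝ≥0∞)/2 = 1 := ENNReal.div_self (by norm_num) (by norm_num)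
  rw [h2]
  unfold trp pnorm frobSq
  rw [if_neg (by norm_num)]
  simp only [ENNReal.toReal_one, Real.rpow_one, one_div_one]
  congr 1
  ext i
  have : (A * Aᵀ) i i = ∑ j, (A i j)^2 := by
    simp [Matrix.mul_apply, Matrix.transpose_apply, pow_two]
  rw [this, abs_of_nonneg (by positivity)]

def GSet (K : Set (Fin d → ℝ)) : Set ℝ :=
  {r : ℝ | ∃ A : Matrix (Fin d) (Fin d) ℝ,
    r = Real.sqrt (trp ((2:ℝ≥0∞) / 2) (A * Aᵀ)) ∧
    ∃ v : Fin d → ℝ, (fun x => x + v) '' K ⊆ (fun x => A.mulVec x) '' ball2 (Fin d)}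

lemma Gamma_two (K : Set (Fin d → ℝ)) : Gamma 2 K = sInf (GSet K) := rfl

lemma Gamma_nonneg (K : Set (Fin d → ℝ)) : 0 ≤ Gamma 2 K := by
  rw [Gamma_two]
  apply Real.sInf_nonneg
  rintro r ⟨A, rfl, -⟩
  exact Real.sqrt_nonneg _

lemma Gamma_le (K : Set (Fin d → ℝ)) (A : Matrix (Fin d) (Fin d) ℝ) (v : Fin d → ℝ)
    (h : (fun x => x + v) '' K ⊆ (fun x => A.mulVec x) '' ball2 (Fin d)) :
    Gamma 2 K ≤ Real.sqrt (frobSq A) := by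
  rw [Gamma_two]
  refine csInf_le ⟨0, ?_⟩ ⟨A, by rw [trp_two], v, h⟩
  rintro r ⟨B, rfl, -⟩
  exact Real.sqrt_nonneg _

/-! ### Dot product helpers -/

lemma dp_self_nonneg (x : Fin d → ℝ) : 0 ≤ x ⬝ᵥ x :=
  Finset.sum_nonneg fun i _ => mul_self_nonneg _

lemma dp_mulVec_left (A : Matrix (Fin d) (Fin d) ℝ) (u x : Fin d → ℝ) :
    (A *ᵥ u) ⬝ᵥ x = u ⬝ᵥ (Aᵀ *ᵥ x) := by
  rw [dotProduct_comm, dotProduct_mulVec, ← Matrix.mulVec_transpose, dotProduct_comm]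

lemma dp_sq (x : Fin d → ℝ) : ∑ i, (x i)^2 = x ⬝ᵥ x := by
  simp [dotProduct, pow_two]

/-! ### Boundedness helpers -/

lemma isBounded_image_mulVec (Q : Matrix (Fin d) (Fin d) ℝ) {K : Set (Fin d → ℝ)}
    (hK : IsBounded K) : IsBounded ((fun x => Q.mulVec x) '' K) := by
  rw [isBounded_iff_forall_norm_le] at hK ⊢
  obtain ⟨C, hC⟩ := hK
  refine ⟨(∑ i, ∑ j, |Q i j|) * C, ?_⟩
  rintro y ⟨x, hx, rfl⟩
  have hxC := hC x hx
  have hC0 : 0 ≤ C := le_trans (norm_nonneg x) hxC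
  rw [pi_norm_le_iff_of_nonneg (by positivity)]
  intro i
  calc ‖(Q *ᵥ x) i‖ = |∑ j, Q i j * x j| := rfl
    _ ≤ ∑ j, |Q i j * x j| := Finset.abs_sum_le_sum_abs _ _
    _ ≤ ∑ j, |Q i j| * C := by
        refine Finset.sum_le_sum fun j _ => ?_
        rw [abs_mul]
        exact mul_le_mul_of_nonneg_left ((norm_le_pi_norm x j).trans hxC) (abs_nonneg _)
    _ = (∑ j, |Q i j|) * C := by rw [Finset.sum_mul]
    _ ≤ (∑ i, ∑ j, |Q i j|) * C := by
        refine mul_le_mul_of_nonneg_right ?_ hC0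
        exact Finset.single_le_sum
          (f := fun i => ∑ j, |Q i j|)
          (fun i _ => Finset.sum_nonneg fun j _ => abs_nonneg _) (Finset.mem_univ i)

lemma bddAbove_lin {S : Set (Fin d → ℝ)} (hS : IsBounded S) (θ : Fin d → ℝ) :
    BddAbove ((fun x => ∑ i, x i * θ i) '' S) := by
  rw [isBounded_iff_forall_norm_le] at hS
  obtain ⟨C, hC⟩ := hS
  refine ⟨C * ∑ i, |θ i|, ?_⟩
  rintro r ⟨x, hx, rfl⟩
  calc ∑ i, x i * θ i ≤ ∑ i, C * |θ i| := by
        refine Finset.sum_le_sum fun i _ => ?_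
        calc x i * θ i ≤ |x i * θ i| := le_abs_self _
          _ = |x i| * |θ i| := abs_mul _ _
          _ ≤ C * |θ i| :=
            mul_le_mul_of_nonneg_right ((norm_le_pi_norm x i).trans (hC x hx)) (abs_nonneg _)
    _ = C * ∑ i, |θ i| := by rw [Finset.mul_sum]

lemma bddBelow_lin {S : Set (Fin d → ℝ)} (hS : IsBounded S) (θ : Fin d → ℝ) :
    BddBelow ((fun x => ∑ i, x i * θ i) '' S) := by
  rw [isBounded_iff_forall_norm_le] at hS
  obtain ⟨C, hC⟩ := hS
  refine ⟨-(C * ∑ i, |θ i|), ?_⟩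
  rintro r ⟨x, hx, rfl⟩
  have : -(∑ i, x i * θ i) ≤ C * ∑ i, |θ i| := by
    rw [← Finset.sum_neg_distrib, Finset.mul_sum]
    refine Finset.sum_le_sum fun i _ => ?_
    calc -(x i * θ i) ≤ |x i * θ i| := neg_le_abs _
      _ = |x i| * |θ i| := abs_mul _ _
      _ ≤ C * |θ i| :=
        mul_le_mul_of_nonneg_right ((norm_le_pi_norm x i).trans (hC x hx)) (abs_nonneg _)
  linarith

lemma GSet_nonempty {K : Set (Fin d → ℝ)} (hK : IsBounded K) : (GSet K).Nonempty := by
  rw [isBounded_iff_forall_norm_le] at hK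
  obtain ⟨C, hC⟩ := hK
  set c : ℝ := Real.sqrt d * (|C| + 1) + 1 with hc
  have hcpos : 0 < c := by positivity
  refine ⟨Real.sqrt (trp ((2:ℝ≥0∞)/2) ((c • (1 : Matrix (Fin d) (Fin d) ℝ)) *
    (c • (1 : Matrix (Fin d) (Fin d) ℝ))ᵀ)), (c • (1 : Matrix (Fin d) (Fin d) ℝ)), rfl, 0, ?_⟩
  rintro y ⟨x, hx, rfl⟩
  refine ⟨c⁻¹ • x, ?_, ?_⟩
  · show ∑ i, (c⁻¹ * x i)^2 ≤ 1
    have hbound : ∀ i, (x i)^2 ≤ C^2 := by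
      intro i
      have h1 : |x i| ≤ C := (norm_le_pi_norm x i).trans (hC x hx)
      have h2 : |x i| ≤ |C| := h1.trans (le_abs_self C)
      calc (x i)^2 = |x i|^2 := (sq_abs _).symm
        _ ≤ |C|^2 := by nlinarith [abs_nonneg (x i)]
        _ = C^2 := sq_abs C
    have hsum : ∑ i, (x i)^2 ≤ d * C^2 := by
      calc ∑ i, (x i)^2 ≤ ∑ _i : Fin d, C^2 := Finset.sum_le_sum fun i _ => hbound i
        _ = d * C^2 := by simp [mul_comm]
    have hc2 : (d:ℝ) * C^2 ≤ c^2 := by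
      have hs : Real.sqrt d ^ 2 = d := Real.sq_sqrt (Nat.cast_nonneg d)
      have h3 : C^2 ≤ (|C|+1)^2 := by nlinarith [abs_nonneg C, le_abs_self C, neg_abs_le C]
      have h4 : (d:ℝ) * C^2 ≤ (Real.sqrt d * (|C|+1))^2 := by
        rw [mul_pow, hs]
        exact mul_le_mul_of_nonneg_left h3 (Nat.cast_nonneg d)
      nlinarith [Real.sqrt_nonneg (d:ℝ), abs_nonneg C]
    calc ∑ i, (c⁻¹ * x i)^2 = c⁻¹^2 * ∑ i, (x i)^2 := by
          rw [Finset.mul_sum]; exact Finset.sum_congr rfl fun i _ => by ring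
      _ ≤ c⁻¹^2 * c^2 := by
          refine mul_le_mul_of_nonneg_left (hsum.trans hc2) (by positivity)
      _ = 1 := by field_simp
  · show (c • (1 : Matrix (Fin d) (Fin d) ℝ)) *ᵥ (c⁻¹ • x) = x + 0
    rw [Matrix.smul_mulVec, Matrix.one_mulVec]
    simp only [smul_smul, mul_inv_cancel₀ hcpos.ne', one_smul]
    funext i; simp

/-! ### Two-term Cauchy-Schwarz -/

lemma two_cs {c₁ c₂ q₁ q₂ : ℝ} (hc₁ : 1 < c₁) (hc₂ : 0 < c₂) (hq₁ : 0 ≤ q₁) (hq₂ : 0 ≤ q₂)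
    (hc : 1/c₁ + 1/c₂ = 1) : Real.sqrt q₁ + Real.sqrt q₂ ≤ Real.sqrt (c₁*q₁ + c₂*q₂) := by
  have hc₁0 : 0 < c₁ := by linarith
  set t : ℝ := c₁ - 1 with ht
  have htpos : 0 < t := by linarith
  have hc₂' : c₂ = 1 + 1/t := by
    field_simp at hc ⊢
    nlinarith [hc]
  have h1 : (Real.sqrt q₁ + Real.sqrt q₂)^2 ≤ c₁*q₁ + c₂*q₂ := by
    have e1 : Real.sqrt q₁ ^ 2 = q₁ := Real.sq_sqrt hq₁
    have e2 : Real.sqrt q₂ ^ 2 = q₂ := Real.sq_sqrt hq₂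
    have key2 : 2*t*(Real.sqrt q₁ * Real.sqrt q₂) ≤ t^2*q₁ + q₂ := by
      nlinarith [sq_nonneg (t*Real.sqrt q₁ - Real.sqrt q₂), e1, e2]
    have key : 2 * (Real.sqrt q₁ * Real.sqrt q₂) ≤ t * q₁ + (1/t) * q₂ := by
      rw [← sub_nonneg]
      have h0 : 0 ≤ t^2*q₁ + q₂ - 2*t*(Real.sqrt q₁ * Real.sqrt q₂) := by linarith
      have h := div_nonneg h0 htpos.le
      refine h.trans_eq ?_
      have ht0 : t ≠ 0 := htpos.ne'
      rw [div_eq_iff ht0]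
      have h1t : 1/t*q₂*t = q₂ := by rw [div_mul_eq_mul_div, one_mul, div_mul_cancel₀ _ ht0]
      linear_combination (-1:ℝ) * h1t
    nlinarith [key]
  calc Real.sqrt q₁ + Real.sqrt q₂ = Real.sqrt ((Real.sqrt q₁ + Real.sqrt q₂)^2) := by
        rw [Real.sqrt_sq (by positivity)]
    _ ≤ Real.sqrt (c₁*q₁ + c₂*q₂) := Real.sqrt_le_sqrt h1

lemma quad_AAt (A : Matrix (Fin d) (Fin d) ℝ) (x : Fin d → ℝ) :
    x ⬝ᵥ ((A * Aᵀ) *ᵥ x) = (Aᵀ *ᵥ x) ⬝ᵥ (Aᵀ *ᵥ x) := by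
  rw [← Matrix.mulVec_mulVec, dotProduct_comm, dp_mulVec_left]

lemma trace_mul_transpose_self (A : Matrix (Fin d) (Fin d) ℝ) :
    (A * Aᵀ).trace = frobSq A := by
  simp [Matrix.trace, Matrix.diag, Matrix.mul_apply, Matrix.transpose_apply, frobSq, pow_two]

lemma le_one_of_le_sqrt {t : ℝ} (h0 : 0 ≤ t) (h : t ≤ Real.sqrt t) : t ≤ 1 := by
  nlinarith [Real.sq_sqrt h0, Real.sqrt_nonneg t]

lemma arith_bound {a₁ a₂ δ dd : ℝ} (ha₁ : 0 ≤ a₁) (ha₂ : 0 ≤ a₂) (hδ : 0 < δ)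
    (hdd : 0 ≤ dd) (hδd : δ * (dd+1) ≤ a₁+a₂) :
    (a₁+a₂+2*δ)/(a₁+δ) * a₁^2 + (a₁+a₂+2*δ)/(a₂+δ) * a₂^2 + δ^2*dd ≤ (a₁+a₂+2*δ)^2 := by
  have hX : 0 < a₁+a₂+2*δ := by linarith
  have e1 : (a₁+a₂+2*δ)/(a₁+δ) * a₁^2 ≤ (a₁+a₂+2*δ)*a₁ := by
    rw [div_mul_eq_mul_div, div_le_iff₀ (by linarith)]
    nlinarith [mul_nonneg (mul_nonneg hX.le ha₁) hδ.le]
  have e2 : (a₁+a₂+2*δ)/(a₂+δ) * a₂^2 ≤ (a₁+a₂+2*δ)*a₂ := by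
    rw [div_mul_eq_mul_div, div_le_iff₀ (by linarith)]
    nlinarith [mul_nonneg (mul_nonneg hX.le ha₂) hδ.le]
  have e3 : δ^2*dd ≤ δ*(a₁+a₂) := by
    have h5 : δ*dd ≤ a₁+a₂-δ := by linarith
    nlinarith [mul_le_mul_of_nonneg_left h5 hδ.le]
  nlinarith [mul_nonneg hδ.le (add_nonneg ha₁ ha₂), e1, e2, e3]

lemma csum_eq {a₁ a₂ δ : ℝ} (ha₁ : 0 ≤ a₁) (ha₂ : 0 ≤ a₂) (hδ : 0 < δ) :
    1/((a₁+a₂+2*δ)/(a₁+δ)) + 1/((a₁+a₂+2*δ)/(a₂+δ)) = 1 := by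
  rw [one_div_div, one_div_div, ← add_div,
    show a₁+δ+(a₂+δ) = a₁+a₂+2*δ by ring, div_self (by linarith)]

/-! ### The ellipsoid sum lemma -/

lemma ellipsoid (A₁ A₂ : Matrix (Fin d) (Fin d) ℝ) {ε : ℝ} (hε : 0 < ε) :
    ∃ A : Matrix (Fin d) (Fin d) ℝ,
      Real.sqrt (frobSq A) ≤ Real.sqrt (frobSq A₁) + Real.sqrt (frobSq A₂) + ε ∧
      ∀ u w : Fin d → ℝ, u ∈ ball2 (Fin d) → w ∈ ball2 (Fin d) →
        ∃ z ∈ ball2 (Fin d), A *ᵥ z = A₁ *ᵥ u + A₂ *ᵥ w := by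
  set a₁ := Real.sqrt (frobSq A₁) with ha₁def
  set a₂ := Real.sqrt (frobSq A₂) with ha₂def
  have ha₁ : 0 ≤ a₁ := Real.sqrt_nonneg _
  have ha₂ : 0 ≤ a₂ := Real.sqrt_nonneg _
  by_cases hzero : a₁ + a₂ = 0
  · have ha₁0 : a₁ = 0 := by linarith
    have ha₂0 : a₂ = 0 := by linarith
    have hA₁ : A₁ = 0 := frobSq_eq_zero ((Real.sqrt_eq_zero (frobSq_nonneg A₁)).mp ha₁0)
    have hA₂ : A₂ = 0 := frobSq_eq_zero ((Real.sqrt_eq_zero (frobSq_nonneg A₂)).mp ha₂0)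
    refine ⟨0, ?_, ?_⟩
    · have : frobSq (0 : Matrix (Fin d) (Fin d) ℝ) = 0 := by simp [frobSq]
      rw [this, Real.sqrt_zero]
      linarith
    · intro u w _ _
      refine ⟨0, by simp [ball2], ?_⟩
      simp [hA₁, hA₂]
  · have hpos : 0 < a₁ + a₂ := lt_of_le_of_ne (by positivity) (Ne.symm hzero)
    set δ : ℝ := min (ε/2) ((a₁+a₂)/(d+1)) with hδdef
    have hδpos : 0 < δ := lt_min (by linarith) (by positivity)
    have hδε : δ ≤ ε/2 := min_le_left _ _
    have hδd : δ * ((d:ℝ)+1) ≤ a₁ + a₂ := by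
      have h := min_le_right (ε/2) ((a₁+a₂)/(d+1))
      calc δ * ((d:ℝ)+1) ≤ ((a₁+a₂)/(d+1)) * ((d:ℝ)+1) :=
            mul_le_mul_of_nonneg_right h (by positivity)
        _ = a₁ + a₂ := by field_simp
    set c₁ : ℝ := (a₁+a₂+2*δ)/(a₁+δ) with hc₁def
    set c₂ : ℝ := (a₁+a₂+2*δ)/(a₂+δ) with hc₂def
    have hc₁1 : 1 < c₁ := (one_lt_div (by linarith)).2 (by linarith)
    have hc₂0 : 0 < c₂ := by positivity
    have hcsum : 1/c₁ + 1/c₂ = 1 := csum_eq ha₁ ha₂ hδpos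
    set M : Matrix (Fin d) (Fin d) ℝ :=
      c₁ • (A₁ * A₁ᵀ) + c₂ • (A₂ * A₂ᵀ) + (δ^2) • (1 : Matrix (Fin d) (Fin d) ℝ) with hMdef
    have hquad : ∀ x : Fin d → ℝ, x ⬝ᵥ (M *ᵥ x) =
        c₁ * ((A₁ᵀ *ᵥ x) ⬝ᵥ (A₁ᵀ *ᵥ x)) + c₂ * ((A₂ᵀ *ᵥ x) ⬝ᵥ (A₂ᵀ *ᵥ x)) + δ^2 * (x ⬝ᵥ x) := by
      intro x
      rw [hMdef]
      rw [Matrix.add_mulVec, Matrix.add_mulVec, Matrix.smul_mulVec,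
        Matrix.smul_mulVec, Matrix.smul_mulVec, Matrix.one_mulVec,
        dotProduct_add, dotProduct_add, dotProduct_smul, dotProduct_smul, dotProduct_smul,
        quad_AAt, quad_AAt]
      simp [smul_eq_mul]
    have hMpd : M.PosDef := by
      rw [Matrix.posDef_iff_dotProduct_mulVec]
      constructor
      · show Mᴴ = M
        rw [Matrix.conjTranspose_eq_transpose_of_trivial, hMdef]
        simp [Matrix.transpose_add, Matrix.transpose_smul, Matrix.transpose_mul,
          Matrix.transpose_transpose, Matrix.transpose_one]
      · intro x hx
        have hxx : 0 < x ⬝ᵥ x := by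
          rcases (Function.ne_iff).mp hx with ⟨i, hi⟩
          have : (0:ℝ) < x i * x i := by
            rcases lt_or_gt_of_ne (show x i ≠ 0 by simpa using hi) with h | h
            · nlinarith
            · nlinarith
          refine Finset.sum_pos' (fun j _ => mul_self_nonneg _) ⟨i, Finset.mem_univ i, this⟩
        have hq := hquad x
        have hstar : star x = x := by funext i; simp
        rw [hstar, hq]
        have h1 : 0 ≤ c₁ * ((A₁ᵀ *ᵥ x) ⬝ᵥ (A₁ᵀ *ᵥ x)) :=
          mul_nonneg (by linarith) (dp_self_nonneg _)
        have h2 : 0 ≤ c₂ * ((A₂ᵀ *ᵥ x) ⬝ᵥ (A₂ᵀ *ᵥ x)) :=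
          mul_nonneg hc₂0.le (dp_self_nonneg _)
        have h3 : 0 < δ^2 * (x ⬝ᵥ x) := mul_pos (pow_pos hδpos 2) hxx
        linarith
    obtain ⟨S, hSS, hSsym⟩ : ∃ S : Matrix (Fin d) (Fin d) ℝ, S * S = M ∧ Sᵀ = S :=
      open scoped MatrixOrder in
      ⟨CFC.sqrt M, CFC.sqrt_mul_sqrt_self M hMpd.posSemidef.nonneg, by
        rw [← Matrix.conjTranspose_eq_transpose_of_trivial]
        open scoped MatrixOrder in exact (CFC.sqrt_nonneg M).posSemidef.1⟩
    have hdet : IsUnit S.det := by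
      have hdd : S.det * S.det = M.det := by rw [← Matrix.det_mul, hSS]
      have hMdet := hMpd.det_pos
      refine isUnit_iff_ne_zero.2 fun h => ?_
      rw [h, mul_zero] at hdd
      linarith [hdd ▸ hMdet]
    have hSinv : S * S⁻¹ = 1 := Matrix.mul_nonsing_inv S hdet
    have ha₁sq : frobSq A₁ = a₁^2 := (Real.sq_sqrt (frobSq_nonneg _)).symm
    have ha₂sq : frobSq A₂ = a₂^2 := (Real.sq_sqrt (frobSq_nonneg _)).symm
    have htr : frobSq S = c₁ * frobSq A₁ + c₂ * frobSq A₂ + δ^2 * d := by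
      have h1 : frobSq S = (S * Sᵀ).trace := (trace_mul_transpose_self S).symm
      rw [h1, hSsym, hSS, hMdef]
      rw [Matrix.trace_add, Matrix.trace_add, Matrix.trace_smul, Matrix.trace_smul,
        Matrix.trace_smul, Matrix.trace_one, trace_mul_transpose_self,
        trace_mul_transpose_self]
      simp [smul_eq_mul]
    have hbound : frobSq S ≤ (a₁+a₂+2*δ)^2 := by
      rw [htr, ha₁sq, ha₂sq]
      exact arith_bound ha₁ ha₂ hδpos (Nat.cast_nonneg d) hδd
    have hfinal_tr : Real.sqrt (frobSq S) ≤ a₁ + a₂ + ε := by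
      calc Real.sqrt (frobSq S) ≤ Real.sqrt ((a₁+a₂+2*δ)^2) := Real.sqrt_le_sqrt hbound
        _ = a₁+a₂+2*δ := Real.sqrt_sq (by positivity)
        _ ≤ a₁+a₂+ε := by linarith
    refine ⟨S, hfinal_tr, ?_⟩
    intro u w hu hw
    set y : Fin d → ℝ := A₁ *ᵥ u + A₂ *ᵥ w with hydef
    have key : ∀ x : Fin d → ℝ, y ⬝ᵥ x ≤ Real.sqrt (x ⬝ᵥ (M *ᵥ x)) := by
      intro x
      set y₁ : Fin d → ℝ := A₁ᵀ *ᵥ x with hy₁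
      set y₂ : Fin d → ℝ := A₂ᵀ *ᵥ x with hy₂
      have h1 : (A₁ *ᵥ u) ⬝ᵥ x ≤ Real.sqrt (y₁ ⬝ᵥ y₁) := by
        rw [dp_mulVec_left, ← hy₁]
        calc u ⬝ᵥ y₁ ≤ Real.sqrt (∑ i, (u i)^2) * Real.sqrt (∑ i, (y₁ i)^2) :=
              Real.sum_mul_le_sqrt_mul_sqrt Finset.univ u y₁
          _ ≤ 1 * Real.sqrt (∑ i, (y₁ i)^2) :=
              mul_le_mul_of_nonneg_right (Real.sqrt_le_one.2 hu) (Real.sqrt_nonneg _)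
          _ = Real.sqrt (y₁ ⬝ᵥ y₁) := by rw [one_mul, dp_sq]
      have h2 : (A₂ *ᵥ w) ⬝ᵥ x ≤ Real.sqrt (y₂ ⬝ᵥ y₂) := by
        rw [dp_mulVec_left, ← hy₂]
        calc w ⬝ᵥ y₂ ≤ Real.sqrt (∑ i, (w i)^2) * Real.sqrt (∑ i, (y₂ i)^2) :=
              Real.sum_mul_le_sqrt_mul_sqrt Finset.univ w y₂
          _ ≤ 1 * Real.sqrt (∑ i, (y₂ i)^2) :=
              mul_le_mul_of_nonneg_right (Real.sqrt_le_one.2 hw) (Real.sqrt_nonneg _)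
          _ = Real.sqrt (y₂ ⬝ᵥ y₂) := by rw [one_mul, dp_sq]
      have h3 : Real.sqrt (y₁ ⬝ᵥ y₁) + Real.sqrt (y₂ ⬝ᵥ y₂) ≤
          Real.sqrt (c₁*(y₁ ⬝ᵥ y₁) + c₂*(y₂ ⬝ᵥ y₂)) :=
        two_cs hc₁1 hc₂0 (dp_self_nonneg _) (dp_self_nonneg _) hcsum
      have h4 : c₁*(y₁ ⬝ᵥ y₁) + c₂*(y₂ ⬝ᵥ y₂) ≤ x ⬝ᵥ (M *ᵥ x) := by
        rw [hquad x]
        have := mul_nonneg (sq_nonneg δ) (dp_self_nonneg x)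
        linarith
      calc y ⬝ᵥ x = (A₁ *ᵥ u) ⬝ᵥ x + (A₂ *ᵥ w) ⬝ᵥ x := by rw [hydef, add_dotProduct]
        _ ≤ Real.sqrt (y₁ ⬝ᵥ y₁) + Real.sqrt (y₂ ⬝ᵥ y₂) := add_le_add h1 h2
        _ ≤ Real.sqrt (c₁*(y₁ ⬝ᵥ y₁) + c₂*(y₂ ⬝ᵥ y₂)) := h3
        _ ≤ Real.sqrt (x ⬝ᵥ (M *ᵥ x)) := Real.sqrt_le_sqrt h4
    set z : Fin d → ℝ := S⁻¹ *ᵥ y with hzdef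
    have hSz : S *ᵥ z = y := by rw [hzdef, Matrix.mulVec_mulVec, hSinv, Matrix.one_mulVec]
    set x₀ : Fin d → ℝ := S⁻¹ *ᵥ z with hx₀def
    have hSx₀ : S *ᵥ x₀ = z := by rw [hx₀def, Matrix.mulVec_mulVec, hSinv, Matrix.one_mulVec]
    have hq : x₀ ⬝ᵥ (M *ᵥ x₀) = z ⬝ᵥ z := by
      rw [← hSS, ← Matrix.mulVec_mulVec, hSx₀, dotProduct_comm, dp_mulVec_left, hSsym, hSx₀]
    have hyx₀ : y ⬝ᵥ x₀ = z ⬝ᵥ z := by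
      rw [← hSz, dp_mulVec_left, hSsym, hSx₀]
    have hk := key x₀
    rw [hyx₀, hq] at hk
    have hz1 : z ⬝ᵥ z ≤ 1 := le_one_of_le_sqrt (dp_self_nonneg z) hk
    have hzb : z ∈ ball2 (Fin d) := by
      show ∑ i, (z i)^2 ≤ 1
      rw [dp_sq]; exact hz1
    exact ⟨z, hzb, hSz⟩

/-! ### vecMulVec algebra -/

lemma vmv_mulVec (u v x : Fin d → ℝ) : (vecMulVec u v) *ᵥ x = (v ⬝ᵥ x) • u := by
  ext i
  simp only [Matrix.mulVec, dotProduct, vecMulVec_apply, Pi.smul_apply, smul_eq_mul]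
  rw [Finset.sum_mul]
  exact Finset.sum_congr rfl fun k _ => by ring

lemma mul_vmv (A : Matrix (Fin d) (Fin d) ℝ) (u v : Fin d → ℝ) :
    A * vecMulVec u v = vecMulVec (A *ᵥ u) v := by
  ext i j
  simp only [Matrix.mul_apply, vecMulVec_apply, Matrix.mulVec, dotProduct]
  rw [Finset.sum_mul]
  exact Finset.sum_congr rfl fun k _ => by ring

lemma vmv_mul (A : Matrix (Fin d) (Fin d) ℝ) (u v : Fin d → ℝ) :
    vecMulVec u v * A = vecMulVec u (Aᵀ *ᵥ v) := by
  ext i j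
  simp only [Matrix.mul_apply, vecMulVec_apply, Matrix.mulVec, dotProduct,
    Matrix.transpose_apply]
  rw [Finset.mul_sum]
  exact Finset.sum_congr rfl fun k _ => by ring

lemma vmv_transpose (u v : Fin d → ℝ) : (vecMulVec u v)ᵀ = vecMulVec v u := by
  ext i j
  simp [vecMulVec_apply, mul_comm]

lemma trace_vmv (u v : Fin d → ℝ) : (vecMulVec u v).trace = u ⬝ᵥ v := by
  simp [Matrix.trace, Matrix.diag, vecMulVec_apply, dotProduct]

lemma trace_eq_frobSq {P : Matrix (Fin d) (Fin d) ℝ} (hsym : Pᵀ = P) (hidem : P * P = P) :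
    P.trace = ∑ i, ∑ j, (P i j)^2 := by
  conv_lhs => rw [← hidem]
  nth_rewrite 2 [← hsym]
  simp [Matrix.trace, Matrix.diag, Matrix.mul_apply, Matrix.transpose_apply, pow_two]

lemma one_le_trace {P : Matrix (Fin d) (Fin d) ℝ} (hsym : Pᵀ = P) (hidem : P * P = P)
    {θ : Fin d → ℝ} (hθP : P *ᵥ θ = θ) (hθ : θ ⬝ᵥ θ = 1) : (1:ℝ) ≤ P.trace := by
  rw [trace_eq_frobSq hsym hidem]
  have key : ∀ i, ((P *ᵥ θ) i)^2 ≤ ∑ j, (P i j)^2 := by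
    intro i
    have h := Finset.sum_mul_sq_le_sq_mul_sq Finset.univ (fun j => P i j) θ
    have hθ1 : ∑ j, (θ j)^2 = 1 := by simpa [dotProduct, pow_two] using hθ
    calc ((P *ᵥ θ) i)^2 = (∑ j, P i j * θ j)^2 := rfl
      _ ≤ (∑ j, (P i j)^2) * ∑ j, (θ j)^2 := h
      _ = ∑ j, (P i j)^2 := by rw [hθ1, mul_one]
  calc (1:ℝ) = ∑ i, ((P *ᵥ θ) i)^2 := by
        rw [hθP]; simpa [dotProduct, pow_two] using hθ.symm
    _ ≤ ∑ i, ∑ j, (P i j)^2 := Finset.sum_le_sum fun i _ => key i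

lemma trace_nonneg' {P : Matrix (Fin d) (Fin d) ℝ} (hsym : Pᵀ = P) (hidem : P * P = P) :
    0 ≤ P.trace := by
  rw [trace_eq_frobSq hsym hidem]; positivity

/-! ### The step lemma -/

lemma Gamma_le_step {K₀ K₁ : Set (Fin d → ℝ)} (hne : (GSet K₁).Nonempty)
    {θ : Fin d → ℝ} (hθ : θ ⬝ᵥ θ = 1) {m M : ℝ} (hmM : m ≤ M)
    (h : ∀ x ∈ K₀, ∃ y ∈ K₁, ∃ t, m ≤ t ∧ t ≤ M ∧ x = y + t • θ) :
    Gamma 2 K₀ ≤ Gamma 2 K₁ + (M - m)/2 := by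
  refine le_of_forall_pos_le_add fun ε hε => ?_
  obtain ⟨r, hrmem, hrlt⟩ := Real.lt_sInf_add_pos hne (half_pos hε)
  obtain ⟨A₁, rfl, v₁, hincl⟩ := hrmem
  rw [trp_two] at hrlt
  set s : ℝ := (M - m)/2 with hsdef
  have hs0 : 0 ≤ s := by rw [hsdef]; linarith
  set c : ℝ := (m + M)/2 with hcdef
  set A₂ : Matrix (Fin d) (Fin d) ℝ := s • vecMulVec θ θ with hA₂def
  have hθ1 : ∑ j, (θ j)^2 = 1 := by rw [dp_sq]; exact hθ
  have hfA₂ : frobSq A₂ = s^2 := by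
    have hrow : ∀ i, ∑ j, (A₂ i j)^2 = s^2 * (θ i)^2 := by
      intro i
      calc ∑ j, (A₂ i j)^2 = ∑ j, (s^2 * (θ i)^2) * (θ j)^2 := by
            refine Finset.sum_congr rfl fun j _ => ?_
            simp only [hA₂def, Matrix.smul_apply, vecMulVec_apply, smul_eq_mul]
            ring
        _ = (s^2 * (θ i)^2) * ∑ j, (θ j)^2 := by rw [← Finset.mul_sum]
        _ = s^2 * (θ i)^2 := by rw [hθ1, mul_one]
    unfold frobSq
    calc ∑ i, ∑ j, (A₂ i j)^2 = ∑ i, s^2 * (θ i)^2 :=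
          Finset.sum_congr rfl fun i _ => hrow i
      _ = s^2 * ∑ i, (θ i)^2 := by rw [← Finset.mul_sum]
      _ = s^2 := by rw [hθ1, mul_one]
  obtain ⟨A, hAtr, hAcov⟩ := ellipsoid A₁ A₂ (half_pos hε)
  set v : Fin d → ℝ := v₁ - c • θ with hvdef
  have hincl' : (fun x => x + v) '' K₀ ⊆ (fun x => A.mulVec x) '' ball2 (Fin d) := by
    rintro _ ⟨x, hx, rfl⟩
    obtain ⟨y, hy, t, htm, htM, rfl⟩ := h x hx
    obtain ⟨u, hu, hAu⟩ := hincl ⟨y, hy, rfl⟩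
    have hrange : ∃ rr : ℝ, s * rr = t - c ∧ rr^2 ≤ 1 := by
      by_cases hs : s = 0
      · refine ⟨0, ?_, by norm_num⟩
        have hMm : M = m := by rw [hsdef] at hs; linarith [(div_eq_zero_iff.mp hs)]
        have : t = c := by rw [hcdef]; rw [hMm] at htM ⊢; linarith
        rw [this, hs]; ring
      · have hspos : 0 < s := lt_of_le_of_ne hs0 (Ne.symm hs)
        refine ⟨(t - c)/s, by field_simp, ?_⟩
        rw [div_pow, div_le_one (by positivity)]
        have h1 : t - c ≤ s := by rw [hsdef, hcdef]; linarith
        have h2 : -s ≤ t - c := by rw [hsdef, hcdef]; linarith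
        nlinarith
    obtain ⟨rr, hsrr, hrr1⟩ := hrange
    have hw : (rr • θ) ∈ ball2 (Fin d) := by
      show ∑ i, (rr * θ i)^2 ≤ 1
      calc ∑ i, (rr * θ i)^2 = rr^2 * ∑ i, (θ i)^2 := by
            rw [Finset.mul_sum]; exact Finset.sum_congr rfl fun i _ => by ring
        _ = rr^2 := by rw [hθ1, mul_one]
        _ ≤ 1 := hrr1
    obtain ⟨z, hz, hAz⟩ := hAcov u (rr • θ) hu hw
    refine ⟨z, hz, ?_⟩
    show A *ᵥ z = (y + t • θ) + v
    rw [hAz]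
    have hA₂w : A₂ *ᵥ (rr • θ) = (t - c) • θ := by
      have h1 : θ ⬝ᵥ (rr • θ) = rr := by rw [dotProduct_smul, hθ, smul_eq_mul, mul_one]
      rw [hA₂def, Matrix.smul_mulVec, vmv_mulVec, h1, smul_smul, hsrr]
    have hAu' : A₁ *ᵥ u = y + v₁ := hAu
    rw [hA₂w, hAu', hvdef, sub_smul]
    abel
  have hG := Gamma_le K₀ A v hincl'
  have hsA₂ : Real.sqrt (frobSq A₂) = s := by rw [hfA₂, Real.sqrt_sq hs0]
  rw [hsA₂] at hAtr
  calc Gamma 2 K₀ ≤ Real.sqrt (frobSq A) := hG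
    _ ≤ Real.sqrt (frobSq A₁) + s + ε/2 := hAtr
    _ ≤ (Gamma 2 K₁ + ε/2) + s + ε/2 := by
        rw [Gamma_two K₁]
        linarith
    _ = Gamma 2 K₁ + s + ε := by ring

/-! ### Putting it together -/

lemma good_case {K : Set (Fin d → ℝ)}
    (P : Matrix (Fin d) (Fin d) ℝ) (hsym : Pᵀ = P) (hidem : P * P = P)
    (hinv : Gamma 2 K ≤ Gamma 2 ((fun x => P.mulVec x) '' K)
        + ((d:ℝ) - P.trace) * (Gamma 2 K / (2*d)))
    (hwidth : ∀ θ : Fin d → ℝ, P.mulVec θ = θ → (∑ i, (θ i)^2) = 1 →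
        Gamma 2 K / (2*d) ≤ widthFn ((fun x => P.mulVec x) '' K) θ) :
    ∃ P' : Matrix (Fin d) (Fin d) ℝ, P'ᵀ = P' ∧ P' * P' = P' ∧
      Gamma 2 K / 2 ≤ Gamma 2 ((fun x => P'.mulVec x) '' K) ∧
      ∀ θ : Fin d → ℝ, P'.mulVec θ = θ → (∑ i, (θ i) ^ 2) = 1 →
        Gamma 2 K / (2 * d) ≤ widthFn ((fun x => P'.mulVec x) '' K) θ := by
  refine ⟨P, hsym, hidem, ?_, hwidth⟩
  have h0 := Gamma_nonneg K
  have htr0 := trace_nonneg' hsym hidem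
  have hw0 : 0 ≤ Gamma 2 K / (2*(d:ℝ)) := by positivity
  have h1 : ((d:ℝ) - P.trace) * (Gamma 2 K / (2*d)) ≤ (d:ℝ) * (Gamma 2 K / (2*d)) := by
    apply mul_le_mul_of_nonneg_right _ hw0
    linarith
  have h2 : (d:ℝ) * (Gamma 2 K / (2*d)) ≤ Gamma 2 K / 2 := by
    rcases Nat.eq_zero_or_pos d with hd | hd
    · subst hd
      norm_num
      linarith
    · have hdpos : (0:ℝ) < d := by exact_mod_cast hd
      have : (d:ℝ) * (Gamma 2 K / (2*d)) = Gamma 2 K / 2 := by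
        field_simp
      linarith
  linarith

lemma main_ind {K : Set (Fin d → ℝ)} (hK : IsBounded K) (hKne : K.Nonempty) :
    ∀ n : ℕ, ∀ P : Matrix (Fin d) (Fin d) ℝ, Pᵀ = P → P * P = P →
      P.trace ≤ (n:ℝ) →
      Gamma 2 K ≤ Gamma 2 ((fun x => P.mulVec x) '' K)
        + ((d:ℝ) - P.trace) * (Gamma 2 K / (2*d)) →
      ∃ P' : Matrix (Fin d) (Fin d) ℝ, P'ᵀ = P' ∧ P' * P' = P' ∧
        Gamma 2 K / 2 ≤ Gamma 2 ((fun x => P'.mulVec x) '' K) ∧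
        ∀ θ : Fin d → ℝ, P'.mulVec θ = θ → (∑ i, (θ i) ^ 2) = 1 →
          Gamma 2 K / (2 * d) ≤ widthFn ((fun x => P'.mulVec x) '' K) θ := by
  intro n
  induction n with
  | zero =>
    intro P hsym hidem htr hinv
    by_cases hbad : ∃ θ : Fin d → ℝ, P.mulVec θ = θ ∧ (∑ i, (θ i)^2) = 1 ∧
        widthFn ((fun x => P.mulVec x) '' K) θ < Gamma 2 K / (2*d)
    · obtain ⟨θ, hθP, hθunit, -⟩ := hbad
      have h1 := one_le_trace hsym hidem hθP (by rw [← dp_sq]; exact hθunit)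
      norm_num at htr
      linarith
    · push_neg at hbad
      exact good_case P hsym hidem hinv fun θ h1 h2 => hbad θ h1 h2
  | succ n ih =>
    intro P hsym hidem htr hinv
    by_cases hbad : ∃ θ : Fin d → ℝ, P.mulVec θ = θ ∧ (∑ i, (θ i)^2) = 1 ∧
        widthFn ((fun x => P.mulVec x) '' K) θ < Gamma 2 K / (2*d)
    · obtain ⟨θ, hθP, hθunit, hwlt⟩ := hbad
      have hθdp : θ ⬝ᵥ θ = 1 := by rw [← dp_sq]; exact hθunit
      set P' : Matrix (Fin d) (Fin d) ℝ := P - vecMulVec θ θ with hP'def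
      have hPθθ : P * vecMulVec θ θ = vecMulVec θ θ := by rw [mul_vmv, hθP]
      have hθθP : vecMulVec θ θ * P = vecMulVec θ θ := by
        rw [vmv_mul]
        rw [hsym, hθP]
      have hθθ2 : vecMulVec θ θ * vecMulVec θ θ = vecMulVec θ θ := by
        rw [mul_vmv, vmv_mulVec, hθdp, one_smul]
      have hsym' : P'ᵀ = P' := by
        rw [hP'def, Matrix.transpose_sub, hsym, vmv_transpose]
      have hidem' : P' * P' = P' := by
        rw [hP'def, Matrix.sub_mul, Matrix.mul_sub, Matrix.mul_sub, hidem, hPθθ, hθθP, hθθ2]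
        abel
      have htrθ : (vecMulVec θ θ).trace = 1 := by rw [trace_vmv, hθdp]
      have htr' : P'.trace = P.trace - 1 := by
        rw [hP'def, Matrix.trace_sub, htrθ]
      have hS₀b : IsBounded ((fun x => P.mulVec x) '' K) := isBounded_image_mulVec P hK
      have hS₀ne : ((fun x => P.mulVec x) '' K).Nonempty := hKne.image _
      have himne : ((fun x => ∑ i, x i * θ i) '' ((fun x => P.mulVec x) '' K)).Nonempty :=
        hS₀ne.image _
      have hba := bddAbove_lin hS₀b θ
      have hbb := bddBelow_lin hS₀b θ
      set m : ℝ := sInf ((fun x => ∑ i, x i * θ i) '' ((fun x => P.mulVec x) '' K)) with hmdef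
      set MM : ℝ := sSup ((fun x => ∑ i, x i * θ i) '' ((fun x => P.mulVec x) '' K)) with hMMdef
      have hmM : m ≤ MM := csInf_le_csSup himne hbb hba
      have hdecomp : ∀ x ∈ (fun x => P.mulVec x) '' K,
          ∃ y ∈ (fun x => P'.mulVec x) '' K, ∃ t, m ≤ t ∧ t ≤ MM ∧ x = y + t • θ := by
        rintro _ ⟨k, hk, rfl⟩
        have hmem : (∑ i, (P *ᵥ k) i * θ i) ∈
            ((fun x => ∑ i, x i * θ i) '' ((fun x => P.mulVec x) '' K)) :=
          ⟨P *ᵥ k, ⟨k, hk, rfl⟩, rfl⟩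
        refine ⟨P' *ᵥ k, ⟨k, hk, rfl⟩, ∑ i, (P *ᵥ k) i * θ i, csInf_le hbb hmem,
          le_csSup hba hmem, ?_⟩
        have h1 : (∑ i, (P *ᵥ k) i * θ i) = θ ⬝ᵥ k := by
          show (P *ᵥ k) ⬝ᵥ θ = θ ⬝ᵥ k
          rw [dp_mulVec_left, hsym, hθP, dotProduct_comm]
        rw [h1, hP'def, Matrix.sub_mulVec, vmv_mulVec]
        abel
      have hgam := Gamma_le_step (GSet_nonempty (isBounded_image_mulVec P' hK))
        hθdp hmM hdecomp
      have hwidtheq : widthFn ((fun x => P.mulVec x) '' K) θ = MM - m := rfl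
      rw [hwidtheq] at hwlt
      apply ih P' hsym' hidem'
      · rw [htr']
        push_cast at htr ⊢
        linarith
      · have hG0 := Gamma_nonneg K
        have hw0 : 0 ≤ Gamma 2 K / (2*(d:ℝ)) := by positivity
        calc Gamma 2 K ≤ Gamma 2 ((fun x => P.mulVec x) '' K)
              + ((d:ℝ) - P.trace) * (Gamma 2 K / (2*d)) := hinv
          _ ≤ (Gamma 2 ((fun x => P'.mulVec x) '' K) + (MM - m)/2)
              + ((d:ℝ) - P.trace) * (Gamma 2 K / (2*d)) := by linarith
          _ ≤ Gamma 2 ((fun x => P'.mulVec x) '' K)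
              + ((d:ℝ) - P'.trace) * (Gamma 2 K / (2*d)) := by
              rw [htr']
              have : ((d:ℝ) - (P.trace - 1)) * (Gamma 2 K / (2*d))
                  = ((d:ℝ) - P.trace) * (Gamma 2 K / (2*d)) + (Gamma 2 K / (2*d)) := by ring
              rw [this]
              linarith
    · push_neg at hbad
      exact good_case P hsym hidem hinv fun θ h1 h2 => hbad θ h1 h2

end ProjAux

/-- for any bounded `K ⊆ ℝ^d` there is an orthogonal projection
`P` with `Γ₂(P K) ≥ Γ₂(K)/2` and width at least `Γ₂(K)/(2d)` in every unit
direction of the image of `P`. -/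
theorem exists_proj_large_width {d : ℕ} (K : Set (Fin d → ℝ))
    (hK : IsBounded K) :
    ∃ P : Matrix (Fin d) (Fin d) ℝ, Pᵀ = P ∧ P * P = P ∧
      Gamma 2 K / 2 ≤ Gamma 2 ((fun x => P.mulVec x) '' K) ∧
      ∀ θ : Fin d → ℝ, P.mulVec θ = θ → (∑ i, (θ i) ^ 2) = 1 →
        Gamma 2 K / (2 * d) ≤ widthFn ((fun x => P.mulVec x) '' K) θ := by
  rcases K.eq_empty_or_nonempty with hKe | hKne
  · subst hKe
    refine ⟨0, Matrix.transpose_zero, by rw [mul_zero], ?_, ?_⟩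
    · rw [Set.image_empty]
      have := ProjAux.Gamma_nonneg (∅ : Set (Fin d → ℝ))
      linarith
    · intro θ hθP hθ1
      rw [Matrix.zero_mulVec] at hθP
      rw [← hθP] at hθ1
      simp at hθ1
  · have himg : (fun x => (1 : Matrix (Fin d) (Fin d) ℝ).mulVec x) '' K = K := by
      have h : (fun x => (1 : Matrix (Fin d) (Fin d) ℝ).mulVec x) = id := by
        funext x; exact Matrix.one_mulVec x
      rw [h, Set.image_id]
    have h1 := ProjAux.main_ind hK hKne d 1 Matrix.transpose_one (one_mul 1) ?_ ?_
    · exact h1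
    · rw [Matrix.trace_one]
      simp
    · rw [himg, Matrix.trace_one]
      simp
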